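/- The Thue–Morse sequence is uniformly recurrent: for all i, n : ℕ there exists N : ℕ such that for every m : ℕ there exists p with m ≤ p ≤ m + N and t (p + j) = t (i + j) for all j < n (every block of t recurs in t with bounded gaps). -/

import Mathlib

/-- The Thue–Morse sequence: `t n = true` iff the number of 1s in the
binary expansion of `n` is odd. -/
def thueMorse (n : ℕ) : Bool := (Nat.digits 2 n).count 1 % 2 == 1

lemma thueMorse_two_mul (n : ℕ) : thueMorse (2 * n) = thueMorse n := by
  rcases Nat.eq_zero_or_pos n with h | h
  · simp [h]
  · unfold thueMorse
    rw [Nat.digits_def' (by norm_num : 1 < 2) (by omega)]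
    simp [Nat.mul_div_cancel_left _ (by norm_num : 0 < 2), Nat.mul_mod_right]

lemma thueMorse_two_mul_add_one (n : ℕ) : thueMorse (2 * n + 1) = !thueMorse n := by
  unfold thueMorse
  rw [Nat.digits_def' (by norm_num : 1 < 2) (by omega)]
  have h1 : (2 * n + 1) % 2 = 1 := by omega
  have h2 : (2 * n + 1) / 2 = n := by omega
  rw [h1, h2]
  rcases Nat.mod_two_eq_zero_or_one ((Nat.digits 2 n).count 1) with h | h <;>
    simp [List.count_cons, h, Nat.add_mod, Nat.mod_two_eq_zero_or_one] <;> omega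

lemma thueMorse_key (k : ℕ) : ∀ a b : ℕ, b < 2 ^ k →
    thueMorse (a * 2 ^ k + b) = xor (thueMorse a) (thueMorse b) := by
  induction k with
  | zero =>
    intro a b hb
    interval_cases b
    simp [thueMorse]
  | succ k ih =>
    intro a b hb
    have h2k : b < 2 * 2 ^ k := by rw [pow_succ] at hb; omega
    rcases Nat.even_or_odd b with ⟨d, hd⟩ | ⟨d, hd⟩
    · subst hd
      have hd' : d < 2 ^ k := by omega
      have he : a * 2 ^ (k + 1) + (d + d) = 2 * (a * 2 ^ k + d) := by
        rw [pow_succ]; ring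
      have he2 : d + d = 2 * d := by ring
      rw [he, thueMorse_two_mul, ih a d hd', he2, thueMorse_two_mul]
    · subst hd
      have hd' : d < 2 ^ k := by omega
      have he : a * 2 ^ (k + 1) + (2 * d + 1) = 2 * (a * 2 ^ k + d) + 1 := by
        rw [pow_succ]; ring
      rw [he, thueMorse_two_mul_add_one, ih a d hd', thueMorse_two_mul_add_one]
      cases thueMorse a <;> cases thueMorse d <;> rfl

/-- The Thue–Morse sequence is uniformly recurrent: every block of `t`
recurs with bounded gaps. -/
theorem thueMorse_uniformly_recurrent (i n : ℕ) :
    ∃ N : ℕ, ∀ m : ℕ, ∃ p : ℕ, m ≤ p ∧ p ≤ m + N ∧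
      ∀ j < n, thueMorse (p + j) = thueMorse (i + j) := by
  set k := i + n with hk
  have hlt : i + n < 2 ^ k := by
    calc i + n < i + n + 1 := by omega
    _ ≤ 2 ^ (i + n) := Nat.succ_le_of_lt (Nat.lt_two_pow_self)
  refine ⟨2 ^ (k + 1) + 2 ^ k + i, fun m => ?_⟩
  set c := m / 2 ^ (k + 1) + 1 with hc
  set a := if thueMorse (2 * c) then 2 * c + 1 else 2 * c with ha
  have hta : thueMorse a = false := by
    by_cases h : thueMorse (2 * c)
    · have h2 : thueMorse c = true := by rw [← thueMorse_two_mul]; exact h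
      rw [ha, if_pos h, thueMorse_two_mul_add_one, h2]
      rfl
    · rw [ha, if_neg h]
      simpa using h
  have hage : 2 * c ≤ a := by rw [ha]; split <;> omega
  have hale : a ≤ 2 * c + 1 := by rw [ha]; split <;> omega
  refine ⟨a * 2 ^ k + i, ?_, ?_, ?_⟩
  · have h1 : m < c * 2 ^ (k + 1) := by
      have hdm := Nat.div_add_mod m (2 ^ (k + 1))
      have hml : m % 2 ^ (k + 1) < 2 ^ (k + 1) :=
        Nat.mod_lt _ (Nat.pow_pos (by norm_num))
      rw [hc]; nlinarith
    have : c * 2 ^ (k + 1) = 2 * c * 2 ^ k := by rw [pow_succ]; ring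
    nlinarith [Nat.mul_le_mul_right (2 ^ k) hage]
  · have h1 : c * 2 ^ (k + 1) ≤ m + 2 ^ (k + 1) := by
      have := Nat.div_mul_le_self m (2 ^ (k + 1))
      rw [hc]; nlinarith
    have h2 : a * 2 ^ k ≤ c * 2 ^ (k + 1) + 2 ^ k := by
      have : a * 2 ^ k ≤ (2 * c + 1) * 2 ^ k := Nat.mul_le_mul_right _ hale
      rw [pow_succ]; nlinarith
    omega
  · intro j hj
    have hij : i + j < 2 ^ k := by omega
    rw [add_assoc, thueMorse_key k a (i + j) hij, hta]
    simp
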